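/- Let (X,φ,D,I) be an impulsive dynamical system on a compact metric space with I(D) ∩ D = ∅ and I Lipschitz. Then the quotient (π(X), d̃) by the relation x ∼ y iff x = y, y = I(x), x = I(y), or I(x) = I(y), with the chain pseudometric d̃, is a compact metric space (in particular, d̃ is a genuine metric: d̃(x̃,ỹ) = 0 implies x̃ = ỹ). -/

import Mathlib

open Set Filter
open scoped ENNReal NNReal Classical Real

universe u

variable {α : Type*}

/-- First impulse time `τ₁(x) = inf { t > 0 : φ_t(x) ∈ D }` (`∞` if the orbit never meets `D`). -/
noncomputable def tau1 [MetricSpace α] (φ : ℝ → α → α) (D : Set α) (x : α) : ℝ≥0∞ :=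
  sInf (ENNReal.ofReal '' {t : ℝ | 0 < t ∧ φ t x ∈ D})

/-- The successive impulse points `x⁰ = x`, `x¹ = φ_{τ₁(x)}(x)`,
`x^{n+1} = φ_{τ₁(I(xⁿ))}(I(xⁿ))`. -/
noncomputable def impSeq [MetricSpace α] (φ : ℝ → α → α) (D : Set α) (I : α → α) (x : α) :
    ℕ → α
  | 0 => x
  | n + 1 =>
      let y := if n = 0 then x else I (impSeq φ D I x n)
      φ (tau1 φ D y).toReal y

/-- The successive impulse times `τ_0 = 0`, `τ_{n+1}(x) = τ_n(x) + τ₁(I(xⁿ))`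
(with `τ_1(x) = τ₁(x)`). -/
noncomputable def impTime [MetricSpace α] (φ : ℝ → α → α) (D : Set α) (I : α → α) (x : α) :
    ℕ → ℝ≥0∞
  | 0 => 0
  | n + 1 => impTime φ D I x n + tau1 φ D (if n = 0 then x else I (impSeq φ D I x n))

/-- `(X,φ,D,I)` is an impulsive dynamical system: `φ` is a continuous semiflow, `D` a proper
closed subset, `I` continuous on `D`, every first impulse time is positive, and the total
impulse time is infinite. -/
def IsIDS [MetricSpace α] (φ : ℝ → α → α) (D : Set α) (I : α → α) : Prop :=
  ((∀ x, φ 0 x = x) ∧ ∀ s t : ℝ, 0 ≤ s → 0 ≤ t → ∀ x, φ (s + t) x = φ s (φ t x)) ∧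
  ContinuousOn (fun p : ℝ × α => φ p.1 p.2) (Set.Ici 0 ×ˢ Set.univ) ∧
  IsClosed D ∧ D ≠ Set.univ ∧ ContinuousOn I D ∧
  (∀ x, 0 < tau1 φ D x) ∧ (∀ x, (⨆ n, impTime φ D I x n) = ⊤)

/-- The tube `D_η = ⋃_{x ∈ D} { φ_t(x) : 0 < t < η }`. -/
def tube (φ : ℝ → α → α) (D : Set α) (η : ℝ) : Set α :=
  ⋃ x ∈ D, (fun t => φ t x) '' Set.Ioo 0 η

/-- `X_η = X \ (D ∪ D_η)`. -/
def Xtube (φ : ℝ → α → α) (D : Set α) (η : ℝ) : Set α :=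
  (D ∪ tube φ D η)ᶜ

/-- `ψ` is the impulsive semiflow associated to `(X,φ,D,I)`: it agrees with the impulsive
drift `γ_x` on each interval between consecutive impulse times. -/
def IsImpulsive [MetricSpace α] (φ : ℝ → α → α) (D : Set α) (I : α → α)
    (ψ : ℝ → α → α) : Prop :=
  ∀ x : α,
    (∀ t : ℝ, 0 ≤ t → ENNReal.ofReal t < impTime φ D I x 1 → ψ t x = φ t x) ∧
    (∀ n : ℕ, 1 ≤ n → ∀ t : ℝ, impTime φ D I x n ≤ ENNReal.ofReal t →
      ENNReal.ofReal t < impTime φ D I x (n + 1) →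
      ψ t x = φ (t - (impTime φ D I x n).toReal) (I (impSeq φ D I x n)))

/-- A regular impulsive dynamical system, with the constants `η, ξ` of the definition. -/
def IsRegularIDS [MetricSpace α] (φ : ℝ → α → α) (D : Set α) (I : α → α) (η ξ : ℝ) : Prop :=
  IsIDS φ D I ∧ (I '' D) ∩ D = ∅ ∧ (∃ K : NNReal, LipschitzOnWith K I D) ∧
  0 < ξ ∧ ξ < η / 4 ∧ IsOpen (tube φ D ξ) ∧
  ((fun x => φ ξ x) '' tube φ D ξ ⊆ Xtube φ D ξ) ∧
  (∀ x ∈ I '' D, ∀ t : ℝ, 0 < t → t ≤ ξ → φ t x ∉ I '' D)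

/-- `τ*`: equal to `τ₁` off `D` and to `0` on `D`. -/
noncomputable def tauStar [MetricSpace α] (φ : ℝ → α → α) (D : Set α) (x : α) : ℝ≥0∞ :=
  if x ∈ D then 0 else tau1 φ D x

/-- The relation identifying `x` with `I x` for `x ∈ D`. -/
def IRel (D : Set α) (I : α → α) (x y : α) : Prop :=
  x = y ∨ (x ∈ D ∧ y = I x) ∨ (y ∈ D ∧ x = I y) ∨ (x ∈ D ∧ y ∈ D ∧ I x = I y)

/-- The chain pseudometric on the quotient by `IRel`:
`d̃(x̃,ỹ) = inf { Σ d(pᵢ,qᵢ) }` over chains `p₀ ∈ x̃`, `q_n ∈ ỹ`, `qᵢ ∼ p_{i+1}`. -/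
noncomputable def chainDist (d : α → α → ℝ) (D : Set α) (I : α → α) (x y : α) : ℝ :=
  sInf {r : ℝ | ∃ (n : ℕ) (p q : ℕ → α), IRel D I x (p 0) ∧ IRel D I (q n) y ∧
    (∀ i < n, IRel D I (q i) (p (i + 1))) ∧
    r = ∑ i ∈ Finset.range (n + 1), d (p i) (q i)}



open Metric

def chainSet (d : α → α → ℝ) (D : Set α) (I : α → α) (x y : α) : Set ℝ :=
  {r : ℝ | ∃ (n : ℕ) (p q : ℕ → α), IRel D I x (p 0) ∧ IRel D I (q n) y ∧
    (∀ i < n, IRel D I (q i) (p (i + 1))) ∧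
    r = ∑ i ∈ Finset.range (n + 1), d (p i) (q i)}


lemma chainDist_eq_sInf (d : α → α → ℝ) (D : Set α) (I : α → α) (x y : α) :
    chainDist d D I x y = sInf (chainSet d D I x y) := rfl

section IRelLemmas
variable {D : Set α} {I : α → α}

lemma irel_refl (D : Set α) (I : α → α) (x : α) : IRel D I x x := Or.inl rfl

lemma irel_symm {x y : α} (h : IRel D I x y) : IRel D I y x := by
  rcases h with rfl | ⟨h1, h2⟩ | ⟨h1, h2⟩ | ⟨h1, h2, h3⟩
  · exact Or.inl rfl
  · exact Or.inr (Or.inr (Or.inl ⟨h1, h2⟩))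
  · exact Or.inr (Or.inl ⟨h1, h2⟩)
  · exact Or.inr (Or.inr (Or.inr ⟨h2, h1, h3.symm⟩))

lemma irel_trans (hID : (I '' D) ∩ D = ∅) {x y z : α}
    (h1 : IRel D I x y) (h2 : IRel D I y z) : IRel D I x z := by
  have notD : ∀ a ∈ D, I a ∉ D := by
    intro a ha hIa
    have : I a ∈ (I '' D) ∩ D := ⟨⟨a, ha, rfl⟩, hIa⟩
    simp [hID] at this
  rcases h1 with rfl | ⟨hxD, rfl⟩ | ⟨hyD, rfl⟩ | ⟨hxD, hyD, e1⟩
  · exact h2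
  · rcases h2 with rfl | ⟨hyD, rfl⟩ | ⟨hzD, e2⟩ | ⟨hyD, hzD, e2⟩
    · exact Or.inr (Or.inl ⟨hxD, rfl⟩)
    · exact absurd hyD (notD x hxD)
    · exact Or.inr (Or.inr (Or.inr ⟨hxD, hzD, e2⟩))
    · exact absurd hyD (notD x hxD)
  · rcases h2 with rfl | ⟨_, rfl⟩ | ⟨hzD, e2⟩ | ⟨_, hzD, e2⟩
    · exact Or.inr (Or.inr (Or.inl ⟨hyD, rfl⟩))
    · exact Or.inl rfl
    · exact absurd hyD (by rw [e2]; exact notD z hzD)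
    · exact Or.inr (Or.inr (Or.inl ⟨hzD, e2⟩))
  · rcases h2 with rfl | ⟨_, rfl⟩ | ⟨hzD, e2⟩ | ⟨_, hzD, e2⟩
    · exact Or.inr (Or.inr (Or.inr ⟨hxD, hyD, e1⟩))
    · exact Or.inr (Or.inl ⟨hxD, e1.symm⟩)
    · exact absurd hyD (by rw [e2]; exact notD z hzD)
    · exact Or.inr (Or.inr (Or.inr ⟨hxD, hzD, e1.trans e2⟩))

end IRelLemmas

section ChainLemmas
variable {X : Type u} [MetricSpace X] {D : Set X} {I : X → X}

lemma chainSet_nonneg {x y : X} : ∀ r ∈ chainSet dist D I x y, (0:ℝ) ≤ r := by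
  rintro r ⟨n, p, q, -, -, -, rfl⟩
  exact Finset.sum_nonneg fun i _ => dist_nonneg

lemma mem_chainSet_pair {x y a b : X} (ha : IRel D I x a) (hb : IRel D I b y) :
    dist a b ∈ chainSet dist D I x y :=
  ⟨0, fun _ => a, fun _ => b, ha, hb, fun i hi => absurd hi (Nat.not_lt_zero i), by simp⟩

lemma chainSet_nonempty (x y : X) : (chainSet dist D I x y).Nonempty :=
  ⟨dist x y, mem_chainSet_pair (irel_refl _ _ _) (irel_refl _ _ _)⟩

lemma chainDist_nonneg (x y : X) : 0 ≤ chainDist dist D I x y :=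
  le_csInf (chainSet_nonempty x y) chainSet_nonneg

lemma chainDist_le_dist_pair {x y a b : X} (ha : IRel D I x a) (hb : IRel D I b y) :
    chainDist dist D I x y ≤ dist a b :=
  csInf_le ⟨0, chainSet_nonneg⟩ (mem_chainSet_pair ha hb)

lemma chainDist_le_dist (x y : X) : chainDist dist D I x y ≤ dist x y :=
  chainDist_le_dist_pair (irel_refl _ _ _) (irel_refl _ _ _)

lemma chainDist_eq_zero_of_irel {x y : X} (h : IRel D I x y) :
    chainDist dist D I x y = 0 :=
  le_antisymm (by simpa using chainDist_le_dist_pair h (irel_refl D I y))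
    (chainDist_nonneg x y)

lemma chainSet_subset_symm (x y : X) :
    chainSet dist D I x y ⊆ chainSet dist D I y x := by
  rintro r ⟨n, p, q, hp, hq, hl, rfl⟩
  refine ⟨n, fun i => q (n - i), fun i => p (n - i), ?_, ?_, ?_, ?_⟩
  · simpa using irel_symm hq
  · show IRel D I (p (n - n)) x
    rw [Nat.sub_self]
    exact irel_symm hp
  · intro i hi
    have h1 : n - i = (n - (i+1)) + 1 := by omega
    have h2 := irel_symm (hl (n - (i+1)) (by omega))
    rwa [← h1] at h2
  · have : ∀ i ∈ Finset.range (n+1),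
        dist (q (n - i)) (p (n - i)) = (fun j => dist (p j) (q j)) (n + 1 - 1 - i) := by
      intro i _
      have : n + 1 - 1 - i = n - i := by omega
      rw [this, dist_comm]
    rw [Finset.sum_congr rfl this, Finset.sum_range_reflect (fun j => dist (p j) (q j)) (n+1)]

lemma chainDist_comm (x y : X) : chainDist dist D I x y = chainDist dist D I y x :=
  congrArg sInf (Set.Subset.antisymm (chainSet_subset_symm x y) (chainSet_subset_symm y x))

lemma chainSet_add_mem' (hID : (I '' D) ∩ D = ∅) {x y z : X} {r s : ℝ}
    (hr : r ∈ chainSet dist D I x y) (hs : s ∈ chainSet dist D I y z) :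
    r + s ∈ chainSet dist D I x z := by
  obtain ⟨n1, p1, q1, hp1, hq1, hl1, rfl⟩ := hr
  obtain ⟨n2, p2, q2, hp2, hq2, hl2, rfl⟩ := hs
  set P : ℕ → X := fun i => if i ≤ n1 then p1 i else p2 (i - (n1+1)) with hP
  set Q : ℕ → X := fun i => if i ≤ n1 then q1 i else q2 (i - (n1+1)) with hQ
  have hPa : ∀ i, i ≤ n1 → P i = p1 i := by
    intro i hi; simp only [hP]; rw [if_pos hi]
  have hPb : ∀ i, n1 < i → P i = p2 (i - (n1+1)) := by
    intro i hi; simp only [hP]; rw [if_neg (by omega)]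
  have hQa : ∀ i, i ≤ n1 → Q i = q1 i := by
    intro i hi; simp only [hQ]; rw [if_pos hi]
  have hQb : ∀ i, n1 < i → Q i = q2 (i - (n1+1)) := by
    intro i hi; simp only [hQ]; rw [if_neg (by omega)]
  refine ⟨n1 + 1 + n2, P, Q, ?_, ?_, ?_, ?_⟩
  · rw [hPa 0 (Nat.zero_le n1)]; exact hp1
  · rw [hQb (n1+1+n2) (by omega)]
    have h : n1 + 1 + n2 - (n1 + 1) = n2 := by omega
    rw [h]; exact hq2
  · intro i hi
    rcases lt_trichotomy i n1 with h | rfl | h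
    · rw [hQa i (le_of_lt h), hPa (i+1) (by omega)]
      exact hl1 i h
    · rw [hQa i le_rfl, hPb (i+1) (by omega)]
      have h : i + 1 - (i + 1) = 0 := by omega
      rw [h]
      exact irel_trans hID hq1 hp2
    · rw [hQb i h, hPb (i+1) (by omega)]
      have h1 : i + 1 - (n1 + 1) = (i - (n1+1)) + 1 := by omega
      rw [h1]
      exact hl2 (i - (n1+1)) (by omega)
  · have hn : n1 + 1 + n2 + 1 = (n1 + 1) + (n2 + 1) := by omega
    rw [hn, Finset.sum_range_add (fun i => dist (P i) (Q i)) (n1+1) (n2+1)]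
    congr 1
    · apply Finset.sum_congr rfl
      intro i hi
      have hi' : i ≤ n1 := by have := Finset.mem_range.mp hi; omega
      rw [hPa i hi', hQa i hi']
    · apply Finset.sum_congr rfl
      intro i _
      have h2 : n1 + 1 + i - (n1 + 1) = i := by omega
      rw [hPb (n1+1+i) (by omega), hQb (n1+1+i) (by omega), h2]

lemma chainDist_triangle' (hID : (I '' D) ∩ D = ∅) (x y z : X) :
    chainDist dist D I x z ≤ chainDist dist D I x y + chainDist dist D I y z := by
  have hbdd : BddBelow (chainSet dist D I x y) := ⟨0, chainSet_nonneg⟩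
  have hbdd' : BddBelow (chainSet dist D I y z) := ⟨0, chainSet_nonneg⟩
  refine le_of_forall_pos_le_add fun ε hε => ?_
  obtain ⟨r, hr, hrlt⟩ := exists_lt_of_csInf_lt (chainSet_nonempty x y)
    (lt_add_of_pos_right _ (half_pos hε) : sInf (chainSet dist D I x y) < _)
  obtain ⟨s, hs, hslt⟩ := exists_lt_of_csInf_lt (chainSet_nonempty y z)
    (lt_add_of_pos_right _ (half_pos hε) : sInf (chainSet dist D I y z) < _)
  have hmem := chainSet_add_mem' hID hr hs
  have h1 : chainDist dist D I x z ≤ r + s := csInf_le ⟨0, chainSet_nonneg⟩ hmem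
  have h2 : chainDist dist D I x y = sInf (chainSet dist D I x y) := rfl
  have h3 : chainDist dist D I y z = sInf (chainSet dist D I y z) := rfl
  rw [h2, h3]
  linarith

lemma chainDist_congr (hID : (I '' D) ∩ D = ∅) {x x' y y' : X}
    (hx : IRel D I x x') (hy : IRel D I y y') :
    chainDist dist D I x y = chainDist dist D I x' y' := by
  have hset : ∀ (a a' b b' : X), IRel D I a a' → IRel D I b b' →
      chainSet dist D I a b ⊆ chainSet dist D I a' b' := by
    rintro a a' b b' ha hb r ⟨n, p, q, h1, h2, h3, rfl⟩
    exact ⟨n, p, q, irel_trans hID (irel_symm ha) h1, irel_trans hID h2 hb, h3, rfl⟩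
  exact congrArg sInf (Set.Subset.antisymm (hset _ _ _ _ hx hy)
    (hset _ _ _ _ (irel_symm hx) (irel_symm hy)))

end ChainLemmas

section Main
variable {X : Type u} [MetricSpace X]

/-- The class of `x` under `IRel` is closed. -/
lemma isClosed_cls {D : Set X} {I : X → X} (hDc : IsClosed D) (hIc : ContinuousOn I D)
    (x : X) : IsClosed {z | IRel D I x z} := by
  have h3 : IsClosed {z | z ∈ D ∧ x = I z} := by
    have h := hIc.preimage_isClosed_of_isClosed hDc (isClosed_singleton (x := x))
    have he : {z | z ∈ D ∧ x = I z} = D ∩ I ⁻¹' {x} := by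
      ext z
      simp only [Set.mem_setOf_eq, Set.mem_inter_iff, Set.mem_preimage,
        Set.mem_singleton_iff, eq_comm]
    rw [he]; exact h
  by_cases hx : x ∈ D
  · have h4 : IsClosed (D ∩ I ⁻¹' {I x}) :=
      hIc.preimage_isClosed_of_isClosed hDc isClosed_singleton
    have he : {z | IRel D I x z} =
        ({x} ∪ {I x}) ∪ ({z | z ∈ D ∧ x = I z} ∪ D ∩ I ⁻¹' {I x}) := by
      ext z
      simp only [Set.mem_setOf_eq, Set.mem_union, Set.mem_singleton_iff,
        Set.mem_inter_iff, Set.mem_preimage]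
      constructor
      · rintro (rfl | ⟨-, rfl⟩ | h | ⟨-, hzD, he⟩)
        · exact Or.inl (Or.inl rfl)
        · exact Or.inl (Or.inr rfl)
        · exact Or.inr (Or.inl h)
        · exact Or.inr (Or.inr ⟨hzD, he.symm⟩)
      · rintro ((rfl | rfl) | (h | ⟨hzD, he⟩))
        · exact Or.inl rfl
        · exact Or.inr (Or.inl ⟨hx, rfl⟩)
        · exact Or.inr (Or.inr (Or.inl h))
        · exact Or.inr (Or.inr (Or.inr ⟨hx, hzD, he.symm⟩))
    rw [he]
    exact ((isClosed_singleton.union isClosed_singleton)).union (h3.union h4)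
  · have he : {z | IRel D I x z} = {x} ∪ {z | z ∈ D ∧ x = I z} := by
      ext z
      simp only [Set.mem_setOf_eq, Set.mem_union, Set.mem_singleton_iff]
      constructor
      · rintro (rfl | ⟨hxD, -⟩ | h | ⟨hxD, -⟩)
        · exact Or.inl rfl
        · exact absurd hxD hx
        · exact Or.inr h
        · exact absurd hxD hx
      · rintro (rfl | h)
        · exact Or.inl rfl
        · exact Or.inr (Or.inr (Or.inl h))
    rw [he]
    exact isClosed_singleton.union h3

lemma aux_compact_pos {Z : Type*} [TopologicalSpace Z] {S : Set Z} (hS : IsCompact S)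
    {f : Z → ℝ} (hf : ContinuousOn f S) (hpos : ∀ z ∈ S, 0 < f z) :
    ∃ ε > 0, ∀ z ∈ S, ε ≤ f z := by
  rcases S.eq_empty_or_nonempty with rfl | hne
  · exact ⟨1, one_pos, fun z hz => absurd hz (Set.notMem_empty z)⟩
  obtain ⟨z0, hz0, hmin⟩ := hS.exists_isMinOn hne hf
  exact ⟨f z0, hpos z0 hz0, fun z hz => isMinOn_iff.mp hmin z hz⟩

/-- The `J` map: `I` on `D`, identity elsewhere. -/
noncomputable def Jmap (D : Set X) (I : X → X) : X → X :=
  fun z => if z ∈ D then I z else z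

/-- Main positivity: if `x` and `y` are not related, the chain distance is positive. -/
lemma chainDist_pos [CompactSpace X] {D : Set X} {I : X → X}
    (hDc : IsClosed D) (hIc : ContinuousOn I D)
    (hID : (I '' D) ∩ D = ∅) {K : NNReal} (hK : LipschitzOnWith K I D)
    {x y : X} (hxy : ¬ IRel D I x y) : 0 < chainDist dist D I x y := by
  have hIDc : IsCompact (I '' D) := (hDc.isCompact).image_of_continuousOn hIc
  have hIDcl : IsClosed (I '' D) := hIDc.isClosed
  have hEc : IsCompact (D ∪ I '' D) := hDc.isCompact.union hIDc
  set J : X → X := Jmap D I with hJdef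
  have hJD : ∀ a ∈ D, J a = I a := fun a ha => if_pos ha
  have hnotD : ∀ a ∈ I '' D, a ∉ D := by
    intro a ha h
    have : a ∈ (I '' D) ∩ D := ⟨ha, h⟩
    simp [hID] at this
  have hJI : ∀ a ∈ I '' D, J a = a := fun a ha => if_neg (hnotD a ha)
  set C : ℝ := (K : ℝ) + 1 with hC
  have hC1 : (1:ℝ) ≤ C := by
    have : (0:ℝ) ≤ (K : ℝ) := K.coe_nonneg
    linarith
  have hC0 : (0:ℝ) < C := lt_of_lt_of_le one_pos hC1
  -- separation δ between D and I '' D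
  obtain ⟨δ, hδ0, hδ'⟩ := aux_compact_pos (hDc.isCompact.prod hIDc)
    (f := fun z : X × X => dist z.1 z.2) (continuous_dist.continuousOn)
    (by
      rintro ⟨a, b⟩ ⟨ha, hb⟩
      refine dist_pos.mpr fun h => ?_
      have hab : a = b := h
      have : b ∈ (I '' D) ∩ D := ⟨hb, hab ▸ ha⟩
      simp [hID] at this)
  have hδ : ∀ a ∈ D, ∀ b ∈ I '' D, δ ≤ dist a b := fun a ha b hb => hδ' (a, b) ⟨ha, hb⟩
  -- J is C-Lipschitz at pairs of E at distance < δ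
  have hJlip : ∀ a ∈ D ∪ I '' D, ∀ b ∈ D ∪ I '' D, dist a b < δ →
      dist (J a) (J b) ≤ C * dist a b := by
    intro a ha b hb hab
    rcases ha with haD | haI
    · rcases hb with hbD | hbI
      · rw [hJD a haD, hJD b hbD]
        calc dist (I a) (I b) ≤ K * dist a b := hK.dist_le_mul a haD b hbD
          _ ≤ C * dist a b := by
              apply mul_le_mul_of_nonneg_right _ dist_nonneg
              rw [hC]; linarith
      · exact absurd (hδ a haD b hbI) (not_le.mpr hab)
    · rcases hb with hbD | hbI
      · have h := hδ b hbD a haI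
        rw [dist_comm] at h
        exact absurd h (not_le.mpr hab)
      · rw [hJI a haI, hJI b hbI]
        exact le_mul_of_one_le_left dist_nonneg hC1
  -- nontrivial links join E-points with equal J-image
  have hlinkE : ∀ a b : X, IRel D I a b →
      a = b ∨ (a ∈ D ∪ I '' D ∧ b ∈ D ∪ I '' D ∧ J a = J b) := by
    intro a b h
    rcases h with rfl | ⟨haD, rfl⟩ | ⟨hbD, rfl⟩ | ⟨haD, hbD, he⟩
    · exact Or.inl rfl
    · have hIa : I a ∈ I '' D := ⟨a, haD, rfl⟩
      exact Or.inr ⟨Or.inl haD, Or.inr hIa, by rw [hJD a haD, hJI _ hIa]⟩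
    · have hIb : I b ∈ I '' D := ⟨b, hbD, rfl⟩
      exact Or.inr ⟨Or.inr hIb, Or.inl hbD, by rw [hJI _ hIb, hJD b hbD]⟩
    · exact Or.inr ⟨Or.inl haD, Or.inl hbD, by rw [hJD a haD, hJD b hbD, he]⟩
  have hJrel : ∀ a ∈ D ∪ I '' D, ∀ b ∈ D ∪ I '' D, J a = J b → IRel D I a b := by
    intro a ha b hb h
    rcases ha with haD | haI <;> rcases hb with hbD | hbI
    · rw [hJD a haD, hJD b hbD] at h
      exact Or.inr (Or.inr (Or.inr ⟨haD, hbD, h⟩))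
    · rw [hJD a haD, hJI b hbI] at h
      exact Or.inr (Or.inl ⟨haD, h.symm⟩)
    · rw [hJI a haI, hJD b hbD] at h
      exact Or.inr (Or.inr (Or.inl ⟨hbD, h⟩))
    · rw [hJI a haI, hJI b hbI] at h
      exact Or.inl h
  -- classes
  have hAc : IsClosed {z | IRel D I x z} := isClosed_cls hDc hIc x
  have hBc : IsClosed {z | IRel D I y z} := isClosed_cls hDc hIc y
  have hAne : {z | IRel D I x z}.Nonempty := ⟨x, irel_refl D I x⟩
  have hBne : {z | IRel D I y z}.Nonempty := ⟨y, irel_refl D I y⟩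
  have hAB : ∀ a ∈ {z | IRel D I x z}, ∀ b ∈ {z | IRel D I y z}, a ≠ b := by
    intro a ha b hb h
    exact hxy (irel_trans hID ha (irel_symm (by rw [h]; exact hb)))
  obtain ⟨ε1, hε10, hε1⟩ := aux_compact_pos (hAc.isCompact.prod hBc.isCompact)
    (f := fun z : X × X => dist z.1 z.2) (continuous_dist.continuousOn)
    (by rintro ⟨a, b⟩ ⟨ha, hb⟩; exact dist_pos.mpr (hAB a ha b hb))
  -- continuity of J on E
  have hJcont : ContinuousOn J (D ∪ I '' D) := by
    intro a ha
    rcases ha with haD | haI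
    · have hsub : (D ∪ I '' D) ∩ Metric.ball a δ ⊆ D := by
        rintro z ⟨hzE, hzb⟩
        rcases hzE with h | h
        · exact h
        · exfalso
          have h1 : dist a z < δ := by rw [dist_comm]; exact mem_ball.mp hzb
          exact absurd (hδ a haD z h) (not_le.mpr h1)
      have h1 : ContinuousWithinAt J ((D ∪ I '' D) ∩ Metric.ball a δ) a := by
        refine ((hIc a haD).mono hsub).congr (fun z hz => hJD z (hsub hz)) (hJD a haD)
      exact (continuousWithinAt_inter (Metric.ball_mem_nhds a hδ0)).mp h1
    · have hsub : (D ∪ I '' D) ∩ Metric.ball a δ ⊆ I '' D := by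
        rintro z ⟨hzE, hzb⟩
        rcases hzE with h | h
        · exfalso
          have h1 : dist z a < δ := mem_ball.mp hzb
          exact absurd (hδ z h a haI) (not_le.mpr h1)
        · exact h
      have h1 : ContinuousWithinAt J ((D ∪ I '' D) ∩ Metric.ball a δ) a := by
        refine (continuousWithinAt_id.mono (Set.inter_subset_right)).congr
          (fun z hz => hJI z (hsub hz)) (hJI a haI)
      exact (continuousWithinAt_inter (Metric.ball_mem_nhds a hδ0)).mp h1
  -- the separating functional and ε2
  obtain ⟨ε2, hε20, hε2⟩ := aux_compact_pos (hEc.prod hEc)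
    (f := fun z : X × X => dist (J z.1) (J z.2) +
      infDist z.1 {z | IRel D I x z} + infDist z.2 {z | IRel D I y z})
    (by
      apply ContinuousOn.add
      apply ContinuousOn.add
      · exact continuous_dist.comp_continuousOn
          ((hJcont.comp continuousOn_fst fun z hz => hz.1).prodMk
           (hJcont.comp continuousOn_snd fun z hz => hz.2))
      · exact ((continuous_infDist_pt _).comp continuous_fst).continuousOn
      · exact ((continuous_infDist_pt _).comp continuous_snd).continuousOn)
    (by
      rintro ⟨a, b⟩ ⟨haE, hbE⟩
      by_contra hcon
      push_neg at hcon
      have h1 : (0:ℝ) ≤ dist (J a) (J b) := dist_nonneg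
      have h2 : (0:ℝ) ≤ infDist a {z | IRel D I x z} := infDist_nonneg
      have h3 : (0:ℝ) ≤ infDist b {z | IRel D I y z} := infDist_nonneg
      have hd0 : dist (J a) (J b) = 0 := by linarith
      have ha0 : infDist a {z | IRel D I x z} = 0 := by linarith
      have hb0 : infDist b {z | IRel D I y z} = 0 := by linarith
      have haA : a ∈ {z | IRel D I x z} := (hAc.mem_iff_infDist_zero hAne).mpr ha0
      have hbB : b ∈ {z | IRel D I y z} := (hBc.mem_iff_infDist_zero hBne).mpr hb0
      exact hxy (irel_trans hID (irel_trans hID haA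
        (hJrel a haE b hbE (dist_eq_zero.mp hd0))) (irel_symm hbB)))
  -- the main chain bound
  set ε0 : ℝ := min (min ε1 (ε2 / (C + 2))) δ with hε0def
  have hε00 : 0 < ε0 := by
    apply lt_min (lt_min hε10 _) hδ0
    positivity
  have key : ∀ r ∈ chainSet dist D I x y, ε0 ≤ r := by
    rintro r ⟨n, p, q, hp, hq, hl, rfl⟩
    by_cases hcase : δ ≤ ∑ i ∈ Finset.range (n+1), dist (p i) (q i)
    · exact le_trans (min_le_right _ _) hcase
    push_neg at hcase
    have hTsucc : ∀ i : ℕ, ∑ j ∈ Finset.range (i+1), dist (p j) (q j) =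
        (∑ j ∈ Finset.range i, dist (p j) (q j)) + dist (p i) (q i) :=
      fun i => Finset.sum_range_succ _ _
    have hTle : ∀ i : ℕ, i ≤ n + 1 → ∑ j ∈ Finset.range i, dist (p j) (q j) ≤
        ∑ j ∈ Finset.range (n+1), dist (p j) (q j) := by
      intro i hi
      apply Finset.sum_le_sum_of_subset_of_nonneg (Finset.range_subset_range.mpr hi)
      intro j _ _
      exact dist_nonneg
    have hT0 : ∀ i : ℕ, (0:ℝ) ≤ ∑ j ∈ Finset.range i, dist (p j) (q j) :=
      fun i => Finset.sum_nonneg fun j _ => dist_nonneg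
    have inv : ∀ i, i ≤ n →
        (infDist (p i) {z | IRel D I x z} ≤ ∑ j ∈ Finset.range i, dist (p j) (q j) ∨
         ∃ a c, a ∈ D ∪ I '' D ∧ c ∈ D ∪ I '' D ∧
           infDist a {z | IRel D I x z} ≤ ∑ j ∈ Finset.range (n+1), dist (p j) (q j) ∧
           dist (J a) (J c) + C * dist c (p i) ≤
             C * ∑ j ∈ Finset.range i, dist (p j) (q j)) := by
      intro i hi
      induction i with
      | zero =>
        left
        have h1 : infDist (p 0) {z | IRel D I x z} = 0 := infDist_zero_of_mem hp
        simp [h1]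
      | succ i ih =>
        have hlink := hl i (by omega)
        rcases ih (by omega) with hA | ⟨a, c, haE, hcE, haA, hbound⟩
        · rcases hlinkE (q i) (p (i+1)) hlink with heq | ⟨hqE, hpE, hJeq⟩
          · left
            have h1 : infDist (p (i+1)) {z | IRel D I x z} ≤
                infDist (p i) {z | IRel D I x z} + dist (p (i+1)) (p i) :=
              infDist_le_infDist_add_dist
            have h2 : dist (p (i+1)) (p i) = dist (p i) (q i) := by
              rw [← heq, dist_comm]
            rw [hTsucc i]
            linarith
          · right
            refine ⟨q i, p (i+1), hqE, hpE, ?_, ?_⟩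
            · have h1 : infDist (q i) {z | IRel D I x z} ≤
                  infDist (p i) {z | IRel D I x z} + dist (q i) (p i) :=
                infDist_le_infDist_add_dist
              have h2 := hTle (i+1) (by omega)
              have h3 : dist (q i) (p i) = dist (p i) (q i) := dist_comm _ _
              have h4 := hTsucc i
              linarith
            · rw [hJeq, dist_self, dist_self, mul_zero, add_zero]
              exact mul_nonneg hC0.le (hT0 _)
        · have hbd : dist (J a) (J c) + C * dist c (q i) ≤
              C * ∑ j ∈ Finset.range (i+1), dist (p j) (q j) := by
            have h3 : dist c (q i) ≤ dist c (p i) + dist (p i) (q i) := dist_triangle _ _ _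
            have h4 := mul_le_mul_of_nonneg_left h3 hC0.le
            rw [hTsucc i, mul_add]
            linarith
          rcases hlinkE (q i) (p (i+1)) hlink with heq | ⟨hqE, hpE, hJeq⟩
          · right
            refine ⟨a, c, haE, hcE, haA, ?_⟩
            rw [← heq]
            exact hbd
          · right
            refine ⟨a, p (i+1), haE, hpE, haA, ?_⟩
            have hcq : dist c (q i) ≤ ∑ j ∈ Finset.range (i+1), dist (p j) (q j) := by
              have h5 : (0:ℝ) ≤ dist (J a) (J c) := dist_nonneg
              have h6 : C * dist c (q i) ≤ C * ∑ j ∈ Finset.range (i+1), dist (p j) (q j) := by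
                linarith
              exact le_of_mul_le_mul_left h6 hC0
            have hcqδ : dist c (q i) < δ :=
              lt_of_le_of_lt (hcq.trans (hTle (i+1) (by omega))) hcase
            have hJcq : dist (J c) (J (q i)) ≤ C * dist c (q i) :=
              hJlip c hcE (q i) hqE hcqδ
            have htri : dist (J a) (J (p (i+1))) ≤ dist (J a) (J c) + dist (J c) (J (q i)) := by
              rw [← hJeq]
              exact dist_triangle _ _ _
            rw [dist_self, mul_zero, add_zero]
            linarith
    have hqB : q n ∈ {z | IRel D I y z} := irel_symm hq
    rcases inv n le_rfl with hA' | ⟨a, c, haE, hcE, haA, hbound⟩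
    · obtain ⟨x', hx'A, hx'd⟩ := hAc.isCompact.exists_infDist_eq_dist hAne (p n)
      have h1 : dist x' (q n) ≤ ∑ i ∈ Finset.range (n+1), dist (p i) (q i) := by
        have h2 : dist x' (q n) ≤ dist x' (p n) + dist (p n) (q n) := dist_triangle _ _ _
        have h3 : dist x' (p n) = infDist (p n) {z | IRel D I x z} := by
          rw [dist_comm]; exact hx'd.symm
        have h4 := hTsucc n
        linarith
      have h5 := hε1 (x', q n) ⟨hx'A, hqB⟩
      calc ε0 ≤ ε1 := le_trans (min_le_left _ _) (min_le_left _ _)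
        _ ≤ _ := le_trans h5 h1
    · have hcp : dist c (p n) ≤ ∑ j ∈ Finset.range n, dist (p j) (q j) := by
        have h5 : (0:ℝ) ≤ dist (J a) (J c) := dist_nonneg
        have h6 : C * dist c (p n) ≤ C * ∑ j ∈ Finset.range n, dist (p j) (q j) := by linarith
        exact le_of_mul_le_mul_left h6 hC0
      have h0 : infDist c {z | IRel D I y z} ≤ ∑ i ∈ Finset.range (n+1), dist (p i) (q i) := by
        have h1 := infDist_le_dist_of_mem hqB (x := c)
        have h2 : dist c (q n) ≤ dist c (p n) + dist (p n) (q n) := dist_triangle _ _ _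
        have h4 := hTsucc n
        linarith
      have h1 : dist (J a) (J c) ≤ C * ∑ i ∈ Finset.range (n+1), dist (p i) (q i) := by
        have h2 := hTle n (by omega)
        have h3 := mul_le_mul_of_nonneg_left h2 hC0.le
        have h4 : (0:ℝ) ≤ C * dist c (p n) := mul_nonneg hC0.le dist_nonneg
        linarith
      have hF : dist (J a) (J c) + infDist a {z | IRel D I x z} + infDist c {z | IRel D I y z}
          ≤ (C + 2) * ∑ i ∈ Finset.range (n+1), dist (p i) (q i) := by
        have hSm0 := hT0 (n+1)
        nlinarith
      have h2 := hε2 (a, c) ⟨haE, hcE⟩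
      have h3 : ε2 / (C + 2) ≤ ∑ i ∈ Finset.range (n+1), dist (p i) (q i) := by
        rw [div_le_iff₀ (by linarith)]
        calc ε2 ≤ _ := h2
          _ ≤ (C + 2) * ∑ i ∈ Finset.range (n+1), dist (p i) (q i) := hF
          _ = (∑ i ∈ Finset.range (n+1), dist (p i) (q i)) * (C + 2) := mul_comm _ _
      exact le_trans (le_trans (min_le_left _ _) (min_le_right _ _)) h3
  have hfin : ε0 ≤ chainDist dist D I x y :=
    le_csInf (chainSet_nonempty x y) key
  linarith

end Main


/-- The quotient of `X` by the relation `IRel D I`, equipped with the chain pseudometric,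
is a compact metric space: packaged as the existence of a compact metric space `Y` and a
surjection `p : X → Y` identifying exactly the `IRel`-classes, whose distance is the chain
pseudometric. -/
def IsQuotMetric {X : Type*} [MetricSpace X] (D : Set X) (I : X → X)
    (Y : Type*) (m : MetricSpace Y) (p : X → Y) : Prop :=
  letI := m
  Function.Surjective p ∧ CompactSpace Y ∧
  (∀ x y : X, p x = p y ↔ {z : X | IRel D I x z} = {z : X | IRel D I y z}) ∧
  (∀ x y : X, dist (p x) (p y) = chainDist dist D I x y)

/-- For an impulsive dynamical system on a compact metric space with
`I(D) ∩ D = ∅` and `I` Lipschitz, the quotient `(π(X), d̃)` by the relation `∼`, with the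
chain pseudometric `d̃`, is a compact metric space. -/
theorem stmt16 {X : Type u} [MetricSpace X] [CompactSpace X]
    (φ : ℝ → X → X) (D : Set X) (I : X → X) (hIDS : IsIDS φ D I)
    (hID : (I '' D) ∩ D = ∅) (hLip : ∃ K : NNReal, LipschitzOnWith K I D) :
    ∃ (Y : Type u) (m : MetricSpace Y) (p : X → Y), IsQuotMetric D I Y m p := by
  obtain ⟨K, hK⟩ := hLip
  have hDc : IsClosed D := hIDS.2.2.1
  have hIc : ContinuousOn I D := hIDS.2.2.2.2.1
  let s : Setoid X := ⟨IRel D I,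
    ⟨fun a => irel_refl D I a, fun h => irel_symm h, fun h1 h2 => irel_trans hID h1 h2⟩⟩
  letI P : PseudoMetricSpace (Quotient s) :=
    { dist := Quotient.lift₂ (chainDist dist D I)
        (fun a b a' b' ha hb => chainDist_congr hID ha hb)
      dist_self := fun q => Quotient.inductionOn q fun a =>
        chainDist_eq_zero_of_irel (irel_refl D I a)
      dist_comm := fun q1 q2 => Quotient.inductionOn₂ q1 q2 fun a b => chainDist_comm a b
      dist_triangle := fun q1 q2 q3 => Quotient.inductionOn₃ q1 q2 q3 fun a b c =>
        chainDist_triangle' hID a b c }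
  letI M : MetricSpace (Quotient s) :=
    { P with
      eq_of_dist_eq_zero := fun {q1 q2} => Quotient.inductionOn₂ q1 q2 (fun a b h => by
        apply Quotient.sound
        by_contra hab
        exact absurd h (ne_of_gt (chainDist_pos hDc hIc hID hK hab))) }
  letI T : TopologicalSpace (Quotient s) :=
    M.toPseudoMetricSpace.toUniformSpace.toTopologicalSpace
  have hsurj : Function.Surjective (Quotient.mk s) :=
    fun q => Quotient.inductionOn q fun a => ⟨a, rfl⟩
  refine ⟨Quotient s, M, Quotient.mk s, hsurj, ?_, ?_, fun a b => rfl⟩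
  · have hcont : Continuous (Quotient.mk s) := by
      apply LipschitzWith.continuous (K := 1)
      apply LipschitzWith.of_dist_le_mul
      intro a b
      rw [NNReal.coe_one, one_mul]
      exact chainDist_le_dist a b
    exact ⟨(Set.range_eq_univ.mpr hsurj) ▸ isCompact_range hcont⟩
  · intro a b
    constructor
    · intro h
      have hr : IRel D I a b := Quotient.exact h
      ext z
      simp only [Set.mem_setOf_eq]
      exact ⟨fun hz => irel_trans hID (irel_symm hr) hz, fun hz => irel_trans hID hr hz⟩
    · intro h
      apply Quotient.sound
      have hb : b ∈ {z : X | IRel D I a z} := by rw [h]; exact irel_refl D I b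
      exact hb
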